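/- Fix n ≥ 3 and 1 ≤ j < i ≤ n. The map that deletes the first letter of π and decreases all letters greater than i by one is a bijection from the set of permutations of [n] avoiding {1243, 1324} that begin with i followed by j, onto the set of permutations of [n-1] avoiding {1243, 1324} that begin with j. Moreover this map decreases the number of descents by exactly one. -/

import Mathlib

/-- The word `w` contains the pattern `p`: some subsequence of `w` is
order-isomorphic to `p`. -/
def ContainsPat (w p : List ℕ) : Prop :=
  ∃ s : List ℕ, s.Sublist w ∧ s.length = p.length ∧
    ∀ i j : ℕ, i < p.length → j < p.length → (s[i]! < s[j]! ↔ p[i]! < p[j]!)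

/-- The word `w` avoids the pattern `p`. -/
def AvoidsPat (w p : List ℕ) : Prop := ¬ ContainsPat w p

/-- `π` is the one-line notation of a permutation of `{1,…,n}`. -/
def IsPermList (n : ℕ) (π : List ℕ) : Prop :=
  π.Perm ((List.range n).map (· + 1))

/-- The number of descents of a word. -/
def descList (π : List ℕ) : ℕ :=
  ((List.range (π.length - 1)).filter (fun t => decide (π[t + 1]! < π[t]!))).length

/-- Decrease every letter greater than `i` by one. -/
def reduceGt (i : ℕ) (l : List ℕ) : List ℕ := l.map (fun x => if i < x then x - 1 else x)

namespace Stmt8Aux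

def f (i x : ℕ) : ℕ := if i < x then x - 1 else x
def g (i x : ℕ) : ℕ := if i ≤ x then x + 1 else x

lemma reduce_eq (i : ℕ) (l : List ℕ) : reduceGt i l = l.map (f i) := rfl

lemma f_lt_iff {i x y : ℕ} (hx : x ≠ i) (hy : y ≠ i) : f i x < f i y ↔ x < y := by
  unfold f; split_ifs <;> omega

lemma f_g (i x : ℕ) : f i (g i x) = x := by unfold f g; split_ifs <;> omega

lemma g_f {i x : ℕ} (hx : x ≠ i) : g i (f i x) = x := by unfold f g; split_ifs <;> omega

lemma g_ne (i x : ℕ) : g i x ≠ i := by unfold g; split_ifs <;> omega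

lemma contains_map_iff {i : ℕ} {w p : List ℕ} (hw : ∀ x ∈ w, x ≠ i) :
    ContainsPat (w.map (f i)) p ↔ ContainsPat w p := by
  constructor
  · rintro ⟨s, hs, hlen, hord⟩
    obtain ⟨s', hs', rfl⟩ := List.sublist_map_iff.mp hs
    rw [List.length_map] at hlen
    refine ⟨s', hs', hlen, fun a b ha hb => ?_⟩
    have ha' : a < s'.length := hlen ▸ ha
    have hb' : b < s'.length := hlen ▸ hb
    rw [← hord a b ha hb]
    rw [getElem!_pos s' a ha', getElem!_pos s' b hb',
      getElem!_pos (s'.map (f i)) a (by simpa using ha'),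
      getElem!_pos (s'.map (f i)) b (by simpa using hb'),
      List.getElem_map, List.getElem_map]
    exact (f_lt_iff (hw _ (hs'.subset (s'.getElem_mem ha')))
      (hw _ (hs'.subset (s'.getElem_mem hb')))).symm
  · rintro ⟨s, hs, hlen, hord⟩
    refine ⟨s.map (f i), hs.map _, by simpa using hlen, fun a b ha hb => ?_⟩
    have ha' : a < s.length := hlen ▸ ha
    have hb' : b < s.length := hlen ▸ hb
    rw [← hord a b ha hb]
    rw [getElem!_pos s a ha', getElem!_pos s b hb',
      getElem!_pos (s.map (f i)) a (by simpa using ha'),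
      getElem!_pos (s.map (f i)) b (by simpa using hb'),
      List.getElem_map, List.getElem_map]
    exact f_lt_iff (hw _ (hs.subset (s.getElem_mem ha'))) (hw _ (hs.subset (s.getElem_mem hb')))

lemma contains_of_sublist {w w' p : List ℕ} (hw : w.Sublist w') (h : ContainsPat w p) :
    ContainsPat w' p := by
  obtain ⟨s, hs, hlen, hord⟩ := h
  exact ⟨s, hs.trans hw, hlen, hord⟩

lemma contains1243 {w : List ℕ} {x1 x2 x3 x4 : ℕ} (hs : [x1,x2,x3,x4].Sublist w)
    (h12 : x1 < x2) (h24 : x2 < x4) (h43 : x4 < x3) : ContainsPat w [1,2,4,3] := by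
  refine ⟨[x1,x2,x3,x4], hs, rfl, fun a b ha hb => ?_⟩
  simp only [List.length_cons, List.length_nil] at ha hb
  interval_cases a <;> interval_cases b <;> simp <;> omega

lemma contains1324 {w : List ℕ} {x1 x2 x3 x4 : ℕ} (hs : [x1,x2,x3,x4].Sublist w)
    (h13 : x1 < x3) (h32 : x3 < x2) (h24 : x2 < x4) : ContainsPat w [1,3,2,4] := by
  refine ⟨[x1,x2,x3,x4], hs, rfl, fun a b ha hb => ?_⟩
  simp only [List.length_cons, List.length_nil] at ha hb
  interval_cases a <;> interval_cases b <;> simp <;> omega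

lemma extract1243 {w : List ℕ} (h : ContainsPat w [1,2,4,3]) :
    ∃ x1 x2 x3 x4, [x1,x2,x3,x4].Sublist w ∧ x1 < x2 ∧ x2 < x4 ∧ x4 < x3 := by
  obtain ⟨s, hs, hlen, hord⟩ := h
  match s, hlen with
  | [x1,x2,x3,x4], _ =>
    refine ⟨x1, x2, x3, x4, hs, ?_, ?_, ?_⟩
    · have := hord 0 1 (by norm_num) (by norm_num); simpa using this
    · have := hord 1 3 (by norm_num) (by norm_num); simpa using this
    · have := hord 3 2 (by norm_num) (by norm_num); simpa using this

lemma extract1324 {w : List ℕ} (h : ContainsPat w [1,3,2,4]) :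
    ∃ x1 x2 x3 x4, [x1,x2,x3,x4].Sublist w ∧ x1 < x3 ∧ x3 < x2 ∧ x2 < x4 := by
  obtain ⟨s, hs, hlen, hord⟩ := h
  match s, hlen with
  | [x1,x2,x3,x4], _ =>
    refine ⟨x1, x2, x3, x4, hs, ?_, ?_, ?_⟩
    · have := hord 0 2 (by norm_num) (by norm_num); simpa using this
    · have := hord 2 1 (by norm_num) (by norm_num); simpa using this
    · have := hord 1 3 (by norm_num) (by norm_num); simpa using this

lemma avoid_cons_1243 {i j : ℕ} {r : List ℕ} (hji : j < i)
    (hτ : AvoidsPat (j :: r) [1,2,4,3]) : AvoidsPat (i :: j :: r) [1,2,4,3] := by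
  intro hc
  obtain ⟨x1, x2, x3, x4, hs, h12, h24, h43⟩ := extract1243 hc
  rcases List.sublist_cons_iff.mp hs with h | ⟨rr, heq, hsub⟩
  · exact hτ (contains1243 h h12 h24 h43)
  · obtain ⟨rfl, rfl⟩ : x1 = i ∧ rr = [x2,x3,x4] := by
      refine ⟨?_, ?_⟩ <;> injection heq with h1 h2 <;> simp_all
    rcases List.sublist_cons_iff.mp hsub with h' | ⟨rr', heq', hsub'⟩
    · exact hτ (contains1243 (List.cons_sublist_cons.mpr h') (by omega) h24 h43)
    · have : x2 = j := by injection heq'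
      omega

lemma avoid_cons_1324 {i j : ℕ} {r : List ℕ} (hji : j < i)
    (hτ : AvoidsPat (j :: r) [1,3,2,4]) : AvoidsPat (i :: j :: r) [1,3,2,4] := by
  intro hc
  obtain ⟨x1, x2, x3, x4, hs, h13, h32, h24⟩ := extract1324 hc
  rcases List.sublist_cons_iff.mp hs with h | ⟨rr, heq, hsub⟩
  · exact hτ (contains1324 h h13 h32 h24)
  · obtain ⟨rfl, rfl⟩ : x1 = i ∧ rr = [x2,x3,x4] := by
      refine ⟨?_, ?_⟩ <;> injection heq with h1 h2 <;> simp_all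
    rcases List.sublist_cons_iff.mp hsub with h' | ⟨rr', heq', hsub'⟩
    · exact hτ (contains1324 (List.cons_sublist_cons.mpr h') (by omega) h32 h24)
    · have : x2 = j := by injection heq'
      omega

/-! ### descent lemmas -/

lemma descList_cons {a : ℕ} {τ : List ℕ} (hτ : τ ≠ []) :
    descList (a :: τ) = (if τ[0]! < a then 1 else 0) + descList τ := by
  obtain ⟨k, hk⟩ : ∃ k, τ.length = k + 1 := by
    cases τ with
    | nil => exact absurd rfl hτ
    | cons b t => exact ⟨t.length, rfl⟩
  unfold descList
  rw [show (a :: τ).length - 1 = k + 1 by simp [hk], List.range_succ_eq_map,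
    List.filter_cons, List.filter_map]
  have h0 : (decide ((a :: τ)[0+1]! < (a :: τ)[0]!)) = decide (τ[0]! < a) := by
    simp
  have h1 : List.filter ((fun t => decide ((a :: τ)[t + 1]! < (a :: τ)[t]!)) ∘ Nat.succ)
      (List.range k) = List.filter (fun t => decide (τ[t + 1]! < τ[t]!)) (List.range k) := by
    apply List.filter_congr
    intro t _
    simp [Function.comp, Nat.succ_eq_add_one]
  rw [h0, h1, hk]
  simp only [Nat.add_sub_cancel]
  by_cases h : τ[0]! < a <;> simp [h] <;> split_ifs <;> simp <;> omega

lemma descList_map {i : ℕ} {τ : List ℕ} (hτ : ∀ x ∈ τ, x ≠ i) :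
    descList (τ.map (f i)) = descList τ := by
  unfold descList
  rw [List.length_map]
  congr 1
  apply List.filter_congr
  intro t ht
  rw [List.mem_range] at ht
  have h1 : t + 1 < τ.length := by omega
  have h0 : t < τ.length := by omega
  rw [getElem!_pos (τ.map (f i)) (t+1) (by simpa using h1),
    getElem!_pos (τ.map (f i)) t (by simpa using h0),
    getElem!_pos τ (t+1) h1, getElem!_pos τ t h0, List.getElem_map, List.getElem_map]
  simp only [decide_eq_decide]
  exact f_lt_iff (hτ _ (τ.getElem_mem h1)) (hτ _ (τ.getElem_mem h0))

/-! ### range lemmas -/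

lemma R_eq (n : ℕ) : (List.range n).map (· + 1) = List.range' 1 n := by
  rw [List.range'_eq_map_range]
  exact List.map_congr_left fun a _ => by omega

lemma split_range' {i n : ℕ} (h1 : 1 ≤ i) (h2 : i ≤ n) :
    List.range' 1 n = List.range' 1 (i-1) ++ i :: List.range' (i+1) (n-i) := by
  have h := List.range'_append (s := 1) (m := i-1) (n := n-i+1) (step := 1)
  rw [show 1 + 1*(i-1) = i by omega, show (i-1)+(n-i+1) = n by omega] at h
  rw [← h]
  congr 1

lemma erase_eq {i n : ℕ} (h1 : 1 ≤ i) (h2 : i ≤ n) :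
    (List.range' 1 n).erase i = List.range' 1 (i-1) ++ List.range' (i+1) (n-i) := by
  rw [split_range' h1 h2, List.erase_append_right _ (by
    intro hmem; rw [List.mem_range'_1] at hmem; omega), List.erase_cons_head]

lemma map_f_high (i : ℕ) : ∀ (k s : ℕ), i < s →
    List.map (f i) (List.range' s k) = List.range' (s-1) k := by
  intro k
  induction k with
  | zero => intro s _; rfl
  | succ k ih =>
    intro s hs
    rw [List.range'_succ, List.map_cons, ih (s+1) (by omega), List.range'_succ]
    congr 1
    · unfold f; split_ifs <;> omega
    · congr 1; omega

lemma map_f_low {i : ℕ} (k : ℕ) (hk : k < i) :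
    List.map (f i) (List.range' 1 k) = List.range' 1 k := by
  rw [show List.range' 1 k = List.map id (List.range' 1 k) by simp]
  rw [List.map_map]
  apply List.map_congr_left
  intro a ha
  rw [List.mem_range'_1] at ha
  simp only [Function.comp, id]
  unfold f; split_ifs <;> omega

lemma map_g_high (i : ℕ) : ∀ (k s : ℕ), i ≤ s →
    List.map (g i) (List.range' s k) = List.range' (s+1) k := by
  intro k
  induction k with
  | zero => intro s _; rfl
  | succ k ih =>
    intro s hs
    rw [List.range'_succ, List.map_cons, ih (s+1) (by omega), List.range'_succ]
    congr 1
    unfold g; split_ifs <;> omega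

lemma map_g_low {i : ℕ} (k : ℕ) (hk : k < i) :
    List.map (g i) (List.range' 1 k) = List.range' 1 k := by
  rw [show List.range' 1 k = List.map id (List.range' 1 k) by simp]
  rw [List.map_map]
  apply List.map_congr_left
  intro a ha
  rw [List.mem_range'_1] at ha
  simp only [Function.comp, id]
  unfold g; split_ifs <;> omega

lemma map_f_erase {i n : ℕ} (h1 : 1 ≤ i) (h2 : i ≤ n) :
    List.map (f i) ((List.range' 1 n).erase i) = List.range' 1 (n-1) := by
  rw [erase_eq h1 h2, List.map_append, map_f_low (i-1) (by omega),
    map_f_high i (n-i) (i+1) (by omega)]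
  have h := List.range'_append (s := 1) (m := i-1) (n := n-i) (step := 1)
  rw [show 1 + 1*(i-1) = i by omega, show (i-1)+(n-i) = n-1 by omega] at h
  simpa using h

lemma map_g_range {i n : ℕ} (h1 : 1 ≤ i) (h2 : i ≤ n) :
    List.map (g i) (List.range' 1 (n-1)) = (List.range' 1 n).erase i := by
  rw [erase_eq h1 h2]
  have h := List.range'_append (s := 1) (m := i-1) (n := n-i) (step := 1)
  rw [show 1 + 1*(i-1) = i by omega, show (i-1)+(n-i) = n-1 by omega] at h
  rw [← h, List.map_append, map_g_low (i-1) (by omega), map_g_high i (n-i) i (le_refl i)]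

end Stmt8Aux

open Stmt8Aux in
/-- For `1 ≤ j < i ≤ n`, deleting the first letter and reducing letters above `i`
is a bijection from `{1243,1324}`-avoiders of `[n]` starting `i, j` onto
`{1243,1324}`-avoiders of `[n-1]` starting with `j`, decreasing `desc` by one. -/
theorem stmt8 (n i j : ℕ) (hn : 3 ≤ n) (hj : 1 ≤ j) (hji : j < i) (hi : i ≤ n) :
    Set.BijOn (fun π : List ℕ => reduceGt i π.tail)
      {π : List ℕ | IsPermList n π ∧ AvoidsPat π [1,2,4,3] ∧ AvoidsPat π [1,3,2,4] ∧
        π[0]! = i ∧ π[1]! = j}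
      {σ : List ℕ | IsPermList (n - 1) σ ∧ AvoidsPat σ [1,2,4,3] ∧
        AvoidsPat σ [1,3,2,4] ∧ σ[0]! = j} ∧
    ∀ π ∈ {π : List ℕ | IsPermList n π ∧ AvoidsPat π [1,2,4,3] ∧ AvoidsPat π [1,3,2,4] ∧
        π[0]! = i ∧ π[1]! = j},
      descList π = descList (reduceGt i π.tail) + 1 := by
  have hi1 : 1 ≤ i := by omega
  -- shape of domain elements
  have shape : ∀ π : List ℕ, π ∈ {π : List ℕ | IsPermList n π ∧ AvoidsPat π [1,2,4,3] ∧
      AvoidsPat π [1,3,2,4] ∧ π[0]! = i ∧ π[1]! = j} →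
      ∃ r, π = i :: j :: r := by
    rintro π ⟨hp, _, _, h0, h1⟩
    have hlen : π.length = n := by
      have := hp.length_eq; simpa using this
    match π, hlen with
    | a :: b :: r, _ =>
      refine ⟨r, ?_⟩
      simp only [List.getElem!_cons_zero] at h0
      rw [show (1:ℕ) = 0 + 1 from rfl, List.getElem!_cons_succ, List.getElem!_cons_zero] at h1
      rw [h0, h1]
    | [], hlen => simp at hlen; omega
    | [a], hlen => simp at hlen; omega
  -- tail facts
  have tail_facts : ∀ π : List ℕ, IsPermList n π → ∀ τ, π = i :: τ →
      (∀ x ∈ τ, x ≠ i) ∧ τ.Perm ((List.range' 1 n).erase i) := by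
    rintro π hp τ rfl
    have hnd : (i :: τ).Nodup := by
      refine hp.nodup_iff.mpr ?_
      exact (List.nodup_range (n := n)).map (add_left_injective 1)
    have hmemi : i ∈ List.range' 1 n := List.mem_range'_1.mpr ⟨hi1, by omega⟩
    have hperm : (i :: τ).Perm (List.range' 1 n) := by
      have := hp; unfold IsPermList at this; rwa [R_eq] at this
    constructor
    · intro x hx
      rintro rfl
      exact (List.nodup_cons.mp hnd).1 hx
    · exact (hperm.trans (List.perm_cons_erase hmemi)).cons_inv
  -- forward membership
  have fwd : ∀ π ∈ {π : List ℕ | IsPermList n π ∧ AvoidsPat π [1,2,4,3] ∧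
      AvoidsPat π [1,3,2,4] ∧ π[0]! = i ∧ π[1]! = j},
      reduceGt i π.tail ∈ {σ : List ℕ | IsPermList (n - 1) σ ∧ AvoidsPat σ [1,2,4,3] ∧
        AvoidsPat σ [1,3,2,4] ∧ σ[0]! = j} := by
    intro π hπ
    obtain ⟨r, rfl⟩ := shape π hπ
    obtain ⟨hp, ha1, ha2, -, -⟩ := hπ
    obtain ⟨hne, hperm⟩ := tail_facts _ hp (j :: r) rfl
    have htail : (j :: r).Sublist (i :: j :: r) := List.sublist_cons_self _ _
    have hτ1 : AvoidsPat (j :: r) [1,2,4,3] := fun hc => ha1 (contains_of_sublist htail hc)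
    have hτ2 : AvoidsPat (j :: r) [1,3,2,4] := fun hc => ha2 (contains_of_sublist htail hc)
    refine ⟨?_, ?_, ?_, ?_⟩
    · unfold IsPermList
      rw [R_eq]
      show ((i :: j :: r).tail.map (f i)).Perm _
      simp only [List.tail_cons]
      exact (hperm.map (f i)).trans (by rw [map_f_erase hi1 hi])
    · show AvoidsPat ((j :: r).map (f i)) _
      exact fun hc => hτ1 ((contains_map_iff hne).mp hc)
    · show AvoidsPat ((j :: r).map (f i)) _
      exact fun hc => hτ2 ((contains_map_iff hne).mp hc)
    · show ((j :: r).map (f i))[0]! = j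
      simp only [List.map_cons, List.getElem!_cons_zero]
      unfold f; split_ifs <;> omega
  refine ⟨⟨fwd, ?_, ?_⟩, ?_⟩
  · -- injectivity
    intro π hπ π' hπ' heq
    obtain ⟨r, rfl⟩ := shape π hπ
    obtain ⟨r', rfl⟩ := shape π' hπ'
    obtain ⟨hne, -⟩ := tail_facts _ hπ.1 (j :: r) rfl
    obtain ⟨hne', -⟩ := tail_facts _ hπ'.1 (j :: r') rfl
    simp only at heq
    have key : ∀ (τ : List ℕ), (∀ x ∈ τ, x ≠ i) → τ.map (g i ∘ f i) = τ := by
      intro τ hτ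
      rw [show τ = List.map id τ by simp]
      rw [List.map_map]
      exact List.map_congr_left fun a ha => by
        simp only [Function.comp, id]
        exact g_f (by simpa using hτ a (by simpa using ha))
    have : (j :: r) = (j :: r') := by
      have h1 := key (j :: r) hne
      have h2 := key (j :: r') hne'
      rw [← List.map_map] at h1 h2
      have heq' : (j :: r).map (f i) = (j :: r').map (f i) := heq
      rw [← h1, ← h2, heq']
    rw [List.cons.injEq] at this
    rw [this.2]
  · -- surjectivity
    intro σ hσ
    obtain ⟨hsp, hsa1, hsa2, hs0⟩ := hσ
    have hσlen : σ.length = n - 1 := by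
      have := hsp.length_eq; simpa using this
    obtain ⟨s, rfl⟩ : ∃ s, σ = j :: s := by
      match σ, hσlen with
      | a :: s, _ =>
        simp only [List.getElem!_cons_zero] at hs0
        exact ⟨s, by rw [hs0]⟩
      | [], hσlen => simp at hσlen; omega
    set τ : List ℕ := (j :: s).map (g i) with hτdef
    have hτne : ∀ x ∈ τ, x ≠ i := by
      intro x hx
      obtain ⟨y, -, rfl⟩ := List.mem_map.mp hx
      exact g_ne i y
    have hfτ : τ.map (f i) = j :: s := by
      rw [hτdef, List.map_map]
      rw [show (j :: s) = List.map id (j :: s) by simp]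
      rw [List.map_map]
      exact List.map_congr_left fun a _ => by simp [Function.comp, f_g]
    have hτperm : τ.Perm ((List.range' 1 n).erase i) := by
      have h1 : ((j :: s)).Perm (List.range' 1 (n-1)) := by
        have := hsp; unfold IsPermList at this; rwa [R_eq] at this
      have := h1.map (g i)
      rwa [map_g_range hi1 hi] at this
    have hτ0 : τ = j :: s.map (g i) := by
      rw [hτdef, List.map_cons]
      congr 1
      unfold g; split_ifs <;> omega
    have hπperm : IsPermList n (i :: τ) := by
      unfold IsPermList
      rw [R_eq]
      have hmemi : i ∈ List.range' 1 n := List.mem_range'_1.mpr ⟨hi1, by omega⟩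
      exact (hτperm.cons i).trans (List.perm_cons_erase hmemi).symm
    have hτa1 : AvoidsPat τ [1,2,4,3] := by
      intro hc
      exact hsa1 (by rw [← hfτ]; exact (contains_map_iff hτne).mpr hc)
    have hτa2 : AvoidsPat τ [1,3,2,4] := by
      intro hc
      exact hsa2 (by rw [← hfτ]; exact (contains_map_iff hτne).mpr hc)
    refine ⟨i :: τ, ⟨hπperm, ?_, ?_, ?_, ?_⟩, ?_⟩
    · rw [hτ0]; exact avoid_cons_1243 hji (hτ0 ▸ hτa1)
    · rw [hτ0]; exact avoid_cons_1324 hji (hτ0 ▸ hτa2)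
    · simp
    · rw [hτ0]; simp
    · show (i :: τ).tail.map (f i) = j :: s
      simp only [List.tail_cons]
      exact hfτ
  · -- descents
    intro π hπ
    obtain ⟨r, rfl⟩ := shape π hπ
    obtain ⟨hne, -⟩ := tail_facts _ hπ.1 (j :: r) rfl
    have h1 : descList (i :: j :: r) = 1 + descList (j :: r) := by
      rw [descList_cons (by simp)]
      simp only [List.getElem!_cons_zero]
      rw [if_pos hji]
    have h2 : descList (reduceGt i (i :: j :: r).tail) = descList (j :: r) := by
      show descList ((j :: r).map (f i)) = _
      exact descList_map hne
    omega
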